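/- arXiv:2409.08034 — 2 statements merged into one kernel-verified Lean document; each statement's English description precedes it below -/
import Mathlib

section
/- Let p be an odd prime, M a finite abelian p-group, and σ an automorphism of M of order 2. Then the product over i ≥ 0 of the determinants of σ acting on the F_p-vector spaces p^i M[p^{i+1}] equals (-1)^{ord_p(#M / #M^σ)}, where M^σ is the fixed subgroup of σ. -/
/-- The subgroup `p^i M[p^{i+1}] = {p^i • y | y ∈ M, p^(i+1) • y = 0}` of `M`. -/
def pLayer (p i : ℕ) (M : Type*) [AddCommGroup M] : AddSubgroup M where
  carrier := {x | ∃ y : M, p ^ (i + 1) • y = 0 ∧ p ^ i • y = x}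
  zero_mem' := ⟨0, by simp, by simp⟩
  add_mem' := by
    rintro a b ⟨y, hy, rfl⟩ ⟨z, hz, rfl⟩
    exact ⟨y + z, by rw [smul_add, hy, hz, add_zero], by rw [smul_add]⟩
  neg_mem' := by
    rintro a ⟨y, hy, rfl⟩
    exact ⟨-y, by rw [smul_neg, hy, neg_zero], by rw [smul_neg]⟩

lemma pLayer_nsmul (p i : ℕ) (M : Type*) [AddCommGroup M] :
    ∀ x : pLayer p i M, p • x = 0 := by
  rintro ⟨x, y, hy, rfl⟩
  ext
  show p • p ^ i • y = 0
  rw [smul_smul, ← pow_succ', hy]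

/-- `pLayer p i M` is killed by `p`, hence an `𝔽_p`-vector space. -/
noncomputable instance pLayer.module (p i : ℕ) [NeZero p] (M : Type*) [AddCommGroup M] :
    Module (ZMod p) (pLayer p i M) :=
  AddCommGroup.zmodModule (pLayer_nsmul p i M)

lemma pLayer_map_mem (p i : ℕ) {M : Type*} [AddCommGroup M] (σ : M ≃+ M) {x : M}
    (hx : x ∈ pLayer p i M) : σ x ∈ pLayer p i M := by
  obtain ⟨y, hy, rfl⟩ := hx
  exact ⟨σ y, by rw [← map_nsmul, hy, map_zero], by rw [← map_nsmul]⟩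

/-- Restriction of an automorphism `σ` of `M` to the `𝔽_p`-vector space `p^i M[p^{i+1}]`,
as a `ZMod p`-linear endomorphism. -/
noncomputable def pLayerRes (p i : ℕ) [NeZero p] {M : Type*} [AddCommGroup M] (σ : M ≃+ M) :
    pLayer p i M →ₗ[ZMod p] pLayer p i M :=
  AddMonoidHom.toZModLinearMap p
    { toFun := fun x => ⟨σ x, pLayer_map_mem p i σ x.2⟩
      map_zero' := by ext; simp
      map_add' := by intro a b; ext; simp }

section AuxDet

lemma my_det_prodMap {K U W : Type*} [Field K] [AddCommGroup U] [Module K U]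
    [AddCommGroup W] [Module K W] [FiniteDimensional K U] [FiniteDimensional K W]
    (f : U →ₗ[K] U) (g : W →ₗ[K] W) :
    LinearMap.det (f.prodMap g) = LinearMap.det f * LinearMap.det g := by
  classical
  let bU := Module.finBasis K U
  let bW := Module.finBasis K W
  rw [← LinearMap.det_toMatrix (bU.prod bW), LinearMap.toMatrix_prodMap,
    Matrix.det_fromBlocks_zero₂₁, LinearMap.det_toMatrix, LinearMap.det_toMatrix]

lemma my_det_involution {K V : Type*} [Field K] [AddCommGroup V] [Module K V]
    [FiniteDimensional K V] (h2 : (2 : K) ≠ 0) (τ : V →ₗ[K] V) (hτ : ∀ v, τ (τ v) = v) :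
    LinearMap.det τ = (-1 : K) ^ (Module.finrank K (LinearMap.ker (τ + LinearMap.id))) := by
  set U := LinearMap.ker (τ - LinearMap.id) with hUdef
  set W := LinearMap.ker (τ + LinearMap.id) with hWdef
  have hU : ∀ v ∈ U, τ v = v := by
    intro v hv
    have := LinearMap.mem_ker.mp hv
    simp only [LinearMap.sub_apply, LinearMap.id_apply, sub_eq_zero] at this
    exact this
  have hW : ∀ v ∈ W, τ v = -v := by
    intro v hv
    have := LinearMap.mem_ker.mp hv
    simp only [LinearMap.add_apply, LinearMap.id_apply, add_eq_zero_iff_eq_neg] at this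
    exact this
  have hUm : ∀ v : V, τ v = v → v ∈ U := by
    intro v hv
    simp only [hUdef, LinearMap.mem_ker, LinearMap.sub_apply, LinearMap.id_apply, hv, sub_self]
  have hWm : ∀ v : V, τ v = -v → v ∈ W := by
    intro v hv
    simp only [hWdef, LinearMap.mem_ker, LinearMap.add_apply, LinearMap.id_apply, hv,
      neg_add_cancel]
  have hdisj : Disjoint U W := by
    rw [Submodule.disjoint_def]
    intro v hvU hvW
    have h1 : τ v = v := hU v hvU
    have h2' : τ v = -v := hW v hvW
    have hv : (2 : K) • v = 0 := by
      rw [two_smul]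
      nth_rewrite 2 [h1.symm.trans h2']
      exact add_neg_cancel v
    rcases smul_eq_zero.mp hv with h | h
    · exact absurd h h2
    · exact h
  have hcod : Codisjoint U W := by
    rw [codisjoint_iff, eq_top_iff]
    intro v _
    refine Submodule.mem_sup.mpr ⟨(2⁻¹ : K) • (v + τ v), ?_, (2⁻¹ : K) • (v - τ v), ?_, ?_⟩
    · exact Submodule.smul_mem _ _ (hUm _ (by rw [map_add, hτ, add_comm]))
    · exact Submodule.smul_mem _ _ (hWm _ (by rw [map_sub, hτ, neg_sub]))
    · rw [← smul_add]
      have : v + τ v + (v - τ v) = (2 : K) • v := by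
        rw [two_smul]; abel
      rw [this, smul_smul, inv_mul_cancel₀ h2, one_smul]
  have hcompl : IsCompl U W := ⟨hdisj, hcod⟩
  let e := Submodule.prodEquivOfIsCompl U W hcompl
  have key : τ = (e : U × W →ₗ[K] V) ∘ₗ
      ((LinearMap.id : U →ₗ[K] U).prodMap (-LinearMap.id : W →ₗ[K] W)) ∘ₗ
      (e.symm : V →ₗ[K] U × W) := by
    apply LinearMap.ext
    intro v
    conv_lhs => rw [← e.apply_symm_apply v]
    simp only [LinearMap.coe_comp, Function.comp_apply, LinearEquiv.coe_coe]
    obtain ⟨u, w⟩ := e.symm v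
    show τ (e (u, w)) = e (u, -w)
    rw [Submodule.coe_prodEquivOfIsCompl', Submodule.coe_prodEquivOfIsCompl', map_add]
    push_cast
    rw [hU u u.2, hW w w.2]
  rw [key, LinearMap.det_conj, my_det_prodMap, LinearMap.det_id, one_mul]
  have hneg : (-LinearMap.id : W →ₗ[K] W) = (-1 : K) • LinearMap.id := by
    ext x; simp
  rw [hneg, LinearMap.det_smul, LinearMap.det_id, mul_one]

end AuxDet

section AuxCard

lemma my_card_eq_range_mul_ker {G H : Type*} [AddGroup G] [AddGroup H] (φ : G →+ H) :
    Nat.card G = Nat.card φ.range * Nat.card φ.ker := by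
  rw [AddSubgroup.card_eq_card_quotient_mul_card_addSubgroup φ.ker]
  congr 1
  exact Nat.card_congr (QuotientAddGroup.quotientKerEquivRange φ).toEquiv

lemma my_card_zmod_module (p : ℕ) [Fact p.Prime] (V : Type*) [AddCommGroup V]
    [Module (ZMod p) V] [Finite V] : Nat.card V = p ^ Module.finrank (ZMod p) V := by
  have : Module.Finite (ZMod p) V := Module.finite_iff_finite.mpr ‹_›
  have b := Module.finBasis (ZMod p) V
  rw [Nat.card_congr b.equivFun.toEquiv, Nat.card_fun]
  simp [Nat.card_eq_fintype_card, ZMod.card]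

def nsmulHom (k : ℕ) (M : Type*) [AddCommGroup M] : M →+ M where
  toFun x := k • x
  map_zero' := smul_zero k
  map_add' := smul_add k

lemma card_ker_nsmul (p i : ℕ) (M : Type*) [AddCommGroup M] [Finite M] :
    Nat.card ((nsmulHom (p ^ (i + 1)) M).ker) =
      Nat.card (pLayer p i M) * Nat.card ((nsmulHom (p ^ i) M).ker) := by
  set φ := ((nsmulHom (p ^ i) M).comp (nsmulHom (p ^ (i + 1)) M).ker.subtype) with hφ
  have hrange : φ.range = pLayer p i M := by
    ext x
    constructor
    · rintro ⟨⟨y, hy⟩, rfl⟩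
      exact ⟨y, hy, rfl⟩
    · rintro ⟨y, hy, rfl⟩
      exact ⟨⟨y, hy⟩, rfl⟩
  have hker : Nat.card φ.ker = Nat.card ((nsmulHom (p ^ i) M).ker) := by
    refine Nat.card_eq_of_bijective (fun z => ⟨z.1.1, z.2⟩) ⟨?_, ?_⟩
    · intro a b h
      exact Subtype.ext (Subtype.ext (by simpa using congrArg Subtype.val h))
    · rintro ⟨w, hw⟩
      have hw' : p ^ i • w = 0 := hw
      refine ⟨⟨⟨w, ?_⟩, ?_⟩, rfl⟩
      · show p ^ (i + 1) • w = 0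
        rw [pow_succ', mul_smul, hw', smul_zero]
      · show p ^ i • w = 0
        exact hw'
  rw [my_card_eq_range_mul_ker φ, hrange, hker]

lemma card_eq_prod_pLayer (p n : ℕ) (M : Type*) [AddCommGroup M] [Finite M]
    (hexp : ∀ x : M, p ^ n • x = 0) :
    Nat.card M = ∏ i ∈ Finset.range n, Nat.card (pLayer p i M) := by
  have key : ∀ j, Nat.card ((nsmulHom (p ^ j) M).ker) =
      ∏ i ∈ Finset.range j, Nat.card (pLayer p i M) := by
    intro j
    induction j with
    | zero =>
      have hbot : (nsmulHom (p ^ 0) M).ker = ⊥ := by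
        ext x
        simp [nsmulHom, AddMonoidHom.mem_ker]
      rw [hbot, Finset.range_zero, Finset.prod_empty]
      exact AddSubgroup.card_bot
    | succ i ih =>
      rw [Finset.prod_range_succ, card_ker_nsmul, ih, mul_comm]
  have htop : (nsmulHom (p ^ n) M).ker = ⊤ := by
    ext x
    simp [nsmulHom, AddMonoidHom.mem_ker, hexp x]
  have h := key n
  rw [htop, AddSubgroup.card_top] at h
  exact h

end AuxCard

section AuxSigma

/-- The `σ x = -x` subgroup. -/
def sigmaNeg {M : Type*} [AddCommGroup M] (σ : M ≃+ M) : AddSubgroup M where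
  carrier := {x | σ x = -x}
  zero_mem' := by simp
  add_mem' := by
    intro a b ha hb
    simp only [Set.mem_setOf_eq, map_add] at *
    rw [ha, hb, neg_add]
  neg_mem' := by
    intro a ha
    simp only [Set.mem_setOf_eq, map_neg] at *
    rw [ha, neg_neg]

lemma card_layer_eq (p i : ℕ) [NeZero p] {M : Type} [AddCommGroup M]
    (σ : M ≃+ M) (hinv : ∀ x : M, σ (σ x) = x)
    (h2 : ∀ z : M, 2 • z = 0 → z = 0) (hsur : ∀ x : M, ∃ y, 2 • y = x) :
    Nat.card (pLayer p i (↥(sigmaNeg σ))) =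
      Nat.card (LinearMap.ker (pLayerRes p i σ + LinearMap.id)) := by
  have mem1 : ∀ x : ↥(pLayer p i (↥(sigmaNeg σ))), ((x : ↥(sigmaNeg σ)) : M) ∈ pLayer p i M := by
    rintro ⟨x, y, hy1, hy2⟩
    refine ⟨(y : M), ?_, ?_⟩
    · have := congrArg (Subtype.val : ↥(sigmaNeg σ) → M) hy1
      simpa using this
    · have := congrArg (Subtype.val : ↥(sigmaNeg σ) → M) hy2
      simpa using this
  have ker1 : ∀ x : ↥(pLayer p i (↥(sigmaNeg σ))),
      (⟨((x : ↥(sigmaNeg σ)) : M), mem1 x⟩ : ↥(pLayer p i M)) ∈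
        LinearMap.ker (pLayerRes p i σ + LinearMap.id) := by
    intro x
    rw [LinearMap.mem_ker]
    apply Subtype.ext
    show σ ((x : ↥(sigmaNeg σ)) : M) + ((x : ↥(sigmaNeg σ)) : M) = 0
    rw [(x : ↥(sigmaNeg σ)).2, neg_add_cancel]
  refine Nat.card_eq_of_bijective (fun x => ⟨⟨_, mem1 x⟩, ker1 x⟩) ⟨?_, ?_⟩
  · intro a b h
    apply Subtype.ext
    apply Subtype.ext
    exact congrArg (fun z => ((z : ↥(LinearMap.ker (pLayerRes p i σ + LinearMap.id))) :
      ↥(pLayer p i M)).1) h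
  · rintro ⟨⟨v, hv⟩, hker⟩
    have hBv : σ v = -v := by
      have := congrArg (Subtype.val : ↥(pLayer p i M) → M) (LinearMap.mem_ker.mp hker)
      have h' : σ v + v = 0 := by simp at this; exact this
      exact eq_neg_of_add_eq_zero_left h'
    obtain ⟨y, hy1, hy2⟩ := hv
    obtain ⟨z, hz⟩ := hsur (y - σ y)
    have hz1 : σ z = -z := by
      have : (2 : ℕ) • (σ z + z) = 0 := by
        rw [smul_add, ← map_nsmul, hz, map_sub, hinv]
        abel
      exact eq_neg_of_add_eq_zero_left (h2 _ this)
    have hz2 : p ^ (i + 1) • z = 0 := by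
      apply h2
      rw [smul_comm, hz, smul_sub, hy1, ← map_nsmul, hy1, map_zero, sub_zero]
    have hz3 : p ^ i • z = v := by
      have : (2 : ℕ) • (p ^ i • z - v) = 0 := by
        rw [smul_sub, smul_comm, hz, smul_sub, hy2, ← map_nsmul, hy2, hBv, two_smul]
        abel
      exact sub_eq_zero.mp (h2 _ this)
    refine ⟨⟨⟨v, hBv⟩, ⟨⟨z, hz1⟩, ?_, ?_⟩⟩, ?_⟩
    · apply Subtype.ext
      simpa using hz2
    · apply Subtype.ext
      simpa using hz3
    · apply Subtype.ext
      apply Subtype.ext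
      rfl

end AuxSigma

/-- for `p` an odd prime, `M` a finite abelian `p`-group of exponent dividing
`p^n`, and `σ` an automorphism of `M` of order 2, the product over `0 ≤ i < n` of the
determinants of `σ` on the `𝔽_p`-vector spaces `p^i M[p^{i+1}]` equals
`(-1) ^ ord_p(#M / #M^σ)`. -/
theorem stmt0 (p n : ℕ) [Fact p.Prime] (hodd : Odd p)
    (M : Type) [AddCommGroup M] [Finite M]
    (hpgroup : ∃ k : ℕ, Nat.card M = p ^ k)
    (hexp : ∀ x : M, p ^ n • x = 0)
    (σ : M ≃+ M) (hσ : addOrderOf (σ : AddAut M) = 2) :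
    ∏ i ∈ Finset.range n, LinearMap.det (pLayerRes p i σ) =
      (-1 : ZMod p) ^ ((Nat.card M / Nat.card {x : M // σ x = x}).factorization p) := by
  have hinv : ∀ x : M, σ (σ x) = x := by
    intro x
    have h := addOrderOf_nsmul_eq_zero (σ : AddAut M)
    rw [hσ, two_nsmul] at h
    exact congrArg (fun e : M ≃+ M => e x) h
  have h2 : ∀ z : M, 2 • z = 0 → z = 0 := by
    intro z hz
    have h1 : addOrderOf z ∣ 2 := addOrderOf_dvd_of_nsmul_eq_zero hz
    have h2' : addOrderOf z ∣ p ^ n := addOrderOf_dvd_of_nsmul_eq_zero (hexp z)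
    have hcop : Nat.Coprime 2 (p ^ n) := Nat.coprime_two_left.mpr hodd.pow
    have hone : addOrderOf z = 1 := Nat.eq_one_of_dvd_one (hcop ▸ Nat.dvd_gcd h1 h2')
    exact AddMonoid.addOrderOf_eq_one_iff.mp hone
  have hsur : ∀ x : M, ∃ y, (2 : ℕ) • y = x := by
    have hinj : Function.Injective (fun y : M => (2 : ℕ) • y) := by
      intro a b hab
      simp only at hab
      have : (2 : ℕ) • (a - b) = 0 := by rw [smul_sub, hab, sub_self]
      exact sub_eq_zero.mp (h2 _ this)
    intro x
    exact Finite.injective_iff_surjective.mp hinj x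
  have hchar : (2 : ZMod p) ≠ 0 := by
    have hp2 : p ≠ 2 := by
      rintro rfl
      simp [Nat.odd_iff] at hodd
    intro h
    have h' : ((2 : ℕ) : ZMod p) = 0 := by exact_mod_cast h
    have hdvd := (ZMod.natCast_eq_zero_iff 2 p).mp h'
    exact hp2 ((Nat.prime_dvd_prime_iff_eq Fact.out Nat.prime_two).mp hdvd)
  have hdet : ∀ i ∈ Finset.range n, LinearMap.det (pLayerRes p i σ) =
      (-1 : ZMod p) ^ Module.finrank (ZMod p)
        (LinearMap.ker (pLayerRes p i σ + LinearMap.id)) := by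
    intro i _
    have : FiniteDimensional (ZMod p) (pLayer p i M) := Module.finite_iff_finite.mpr inferInstance
    exact my_det_involution hchar _ (fun v => Subtype.ext (hinv v.1))
  rw [Finset.prod_congr rfl hdet, Finset.prod_pow_eq_pow_sum]
  set f : M →+ M := AddMonoidHom.id M - σ.toAddMonoidHom with hf
  have hrange : f.range = sigmaNeg σ := by
    ext x
    constructor
    · rintro ⟨y, rfl⟩
      show σ (f y) = -(f y)
      simp only [hf, AddMonoidHom.sub_apply, AddMonoidHom.id_apply,
        AddEquiv.coe_toAddMonoidHom, map_sub, hinv, neg_sub]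
    · intro hx
      have hx' : σ x = -x := hx
      obtain ⟨y, hy⟩ := hsur x
      have hσy : σ y = -y := by
        have : (2 : ℕ) • (σ y + y) = 0 := by
          rw [smul_add, ← map_nsmul, hy, hx', neg_add_cancel]
        exact eq_neg_of_add_eq_zero_left (h2 _ this)
      refine ⟨y, ?_⟩
      show y - σ y = x
      rw [hσy, sub_neg_eq_add, ← two_smul ℕ, hy]
  have hkercard : Nat.card f.ker = Nat.card {x : M // σ x = x} := by
    refine Nat.card_congr (Equiv.subtypeEquivRight fun x => ?_)
    simp only [AddMonoidHom.mem_ker, hf, AddMonoidHom.sub_apply, AddMonoidHom.id_apply,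
      AddEquiv.coe_toAddMonoidHom]
    rw [sub_eq_zero, eq_comm]
  have hcardM : Nat.card M = Nat.card {x : M // σ x = x} * Nat.card (sigmaNeg σ) := by
    rw [my_card_eq_range_mul_ker f, hrange, hkercard, mul_comm]
  haveI : Nonempty {x : M // σ x = x} := ⟨⟨0, map_zero σ⟩⟩
  have hdiv : Nat.card M / Nat.card {x : M // σ x = x} = Nat.card (sigmaNeg σ) := by
    rw [hcardM, Nat.mul_div_cancel_left _ Nat.card_pos]
  rw [hdiv]
  have hexpB : ∀ x : ↥(sigmaNeg σ), p ^ n • x = 0 := by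
    intro x
    apply Subtype.ext
    simpa using hexp (x : M)
  have hprod := card_eq_prod_pLayer p n (↥(sigmaNeg σ)) hexpB
  have hfac : ∀ i ∈ Finset.range n, Nat.card (pLayer p i (↥(sigmaNeg σ))) =
      p ^ Module.finrank (ZMod p) (LinearMap.ker (pLayerRes p i σ + LinearMap.id)) := by
    intro i _
    rw [card_layer_eq p i σ hinv h2 hsur, my_card_zmod_module p]
  rw [Finset.prod_congr rfl hfac, Finset.prod_pow_eq_pow_sum] at hprod
  rw [hprod, Nat.Prime.factorization_pow Fact.out, Finsupp.single_eq_same]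
end

section
/- Let φ : X₁ → X₂ and φ' : X₂ → X₃ be homomorphisms of abelian groups, each with finite kernel and finite cokernel. Then φ' ∘ φ has finite kernel and cokernel, and z(φ' ∘ φ) = z(φ') · z(φ), where z(ψ) = #coker(ψ)/#ker(ψ) ∈ Q. -/
/-- if `φ : X₁ → X₂` and `φ' : X₂ → X₃` are homomorphisms of abelian groups
with finite kernel and cokernel, then so is `φ' ∘ φ`, and
`z(φ' ∘ φ) = z(φ') · z(φ)`, where `z(ψ) = #coker(ψ)/#ker(ψ) ∈ ℚ`. -/
theorem stmt16 (X₁ X₂ X₃ : Type)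
    [AddCommGroup X₁] [AddCommGroup X₂] [AddCommGroup X₃]
    (φ : X₁ →+ X₂) (φ' : X₂ →+ X₃)
    (h1k : Finite φ.ker) (h1c : Finite (X₂ ⧸ φ.range))
    (h2k : Finite φ'.ker) (h2c : Finite (X₃ ⧸ φ'.range)) :
    Finite (φ'.comp φ).ker ∧ Finite (X₃ ⧸ (φ'.comp φ).range) ∧
      (Nat.card (X₃ ⧸ (φ'.comp φ).range) : ℚ) / (Nat.card (φ'.comp φ).ker : ℚ) =
        ((Nat.card (X₃ ⧸ φ'.range) : ℚ) / (Nat.card φ'.ker : ℚ)) *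
          ((Nat.card (X₂ ⧸ φ.range) : ℚ) / (Nat.card φ.ker : ℚ)) := by
  classical
  set R := φ.range with hR
  set K' := φ'.ker with hK'
  set S := φ'.range with hS
  set k₁ := Nat.card φ.ker with hk1d
  set k₂ := Nat.card K' with hk2d
  set c₁ := Nat.card (X₂ ⧸ R) with hc1d
  set c₂ := Nat.card (X₃ ⧸ S) with hc2d
  set m := Nat.card (R ⊓ K' : AddSubgroup X₂) with hmd
  set r := R.relIndex K' with hrd
  set q := (R ⊔ K' : AddSubgroup X₂).index with hqd
  have hmfin : Finite (R ⊓ K' : AddSubgroup X₂) :=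
    Finite.of_injective (AddSubgroup.inclusion inf_le_right)
      (AddSubgroup.inclusion_injective _)
  -- (4) k₂ = r * m
  have h4 : k₂ = r * m := by
    have hcard := AddSubgroup.card_eq_card_quotient_mul_card_addSubgroup (R.addSubgroupOf K')
    have hm' : Nat.card (R.addSubgroupOf K') = m := by
      rw [← AddSubgroup.inf_addSubgroupOf_right]
      exact Nat.card_congr (AddSubgroup.addSubgroupOfEquivOfLe inf_le_right).toEquiv
    rw [hm'] at hcard
    exact hcard
  -- (3) c₁ = r * q
  have h3 : c₁ = r * q := by
    have h1 : R.relIndex (R ⊔ K') * (R ⊔ K' : AddSubgroup X₂).index = R.index :=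
      AddSubgroup.relIndex_mul_index le_sup_left
    rw [AddSubgroup.relIndex_sup_left] at h1
    exact h1.symm
  -- (2) card coker comp = q * c₂
  have h2 : Nat.card (X₃ ⧸ (φ'.comp φ).range) = q * c₂ := by
    have hT : (φ'.comp φ).range ≤ S := by
      rintro x ⟨y, rfl⟩; exact ⟨φ y, rfl⟩
    have hmul : ((φ'.comp φ).range).relIndex S * S.index = ((φ'.comp φ).range).index :=
      AddSubgroup.relIndex_mul_index hT
    have hcom : ((φ'.comp φ).range.comap φ').index = ((φ'.comp φ).range).relIndex S :=
      AddSubgroup.index_comap _ φ'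
    have hco : (φ'.comp φ).range.comap φ' = R ⊔ K' := by
      rw [AddMonoidHom.range_comp, AddSubgroup.comap_map_eq]
    rw [hco] at hcom
    rw [← hcom] at hmul
    exact hmul.symm
  -- (1) card ker comp = m * k₁
  have h1 : Nat.card (φ'.comp φ).ker = m * k₁ := by
    have hker : (φ'.comp φ).ker = K'.comap φ := (AddMonoidHom.comap_ker φ' φ).symm
    set G₀ := (φ'.comp φ).ker with hG₀
    set ψ : G₀ →+ X₂ := φ.comp G₀.subtype with hψ
    have hkψ : ψ.ker = φ.ker.addSubgroupOf G₀ := (AddMonoidHom.comap_ker φ G₀.subtype).symm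
    have hrψ : ψ.range = R ⊓ K' := by
      rw [hψ, AddMonoidHom.range_comp, AddSubgroup.range_subtype, hker,
        AddSubgroup.map_comap_eq]
    have hcard := AddSubgroup.card_eq_card_quotient_mul_card_addSubgroup ψ.ker
    have hq : Nat.card (G₀ ⧸ ψ.ker) = m := by
      rw [hmd, ← hrψ]
      exact Nat.card_congr (QuotientAddGroup.quotientKerEquivRange ψ).toEquiv
    have hk : Nat.card ψ.ker = k₁ := by
      rw [hkψ]
      have hle : φ.ker ≤ G₀ := by
        intro x hx
        rw [AddMonoidHom.mem_ker] at hx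
        show x ∈ (φ'.comp φ).ker
        rw [AddMonoidHom.mem_ker, AddMonoidHom.comp_apply, hx, map_zero]
      exact Nat.card_congr (AddSubgroup.addSubgroupOfEquivOfLe hle).toEquiv
    rw [hq, hk] at hcard
    exact hcard
  -- positivity
  have hk₁ : 0 < k₁ := Nat.card_pos
  have hk₂ : 0 < k₂ := Nat.card_pos
  have hc₁ : 0 < c₁ := Nat.card_pos
  have hc₂ : 0 < c₂ := Nat.card_pos
  have hm : 0 < m := Nat.card_pos
  have hr : 0 < r := by
    rcases Nat.eq_zero_or_pos r with h | h
    · rw [h, zero_mul] at h4; omega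
    · exact h
  have hqpos : 0 < q := by
    rcases Nat.eq_zero_or_pos q with h | h
    · rw [h, mul_zero] at h3; omega
    · exact h
  refine ⟨?_, ?_, ?_⟩
  · exact (Nat.card_pos_iff.mp (by rw [h1]; positivity)).2
  · exact (Nat.card_pos_iff.mp (by rw [h2]; positivity)).2
  · rw [h1, h2, h3, h4]
    push_cast
    have hk₁' : (k₁ : ℚ) ≠ 0 := by positivity
    have hm' : (m : ℚ) ≠ 0 := by positivity
    have hr' : (r : ℚ) ≠ 0 := by positivity
    field_simp
end
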